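/- Let m < 0 and α, β ∈ ℝ, and define the desingularized vector field g on ℝ × [0,∞) × ℝ by g(χ,s,x) = (s^{1−m}, −sx, −x² − βχx − α·s^{1−m}), where s^{1−m} is the real power (for s ≥ 0). Then: (i) for every χ ∈ ℝ, both (χ, 0, 0) and (χ, 0, −βχ) are equilibria of g; (ii) g is differentiable at each point (χ, 0, −βχ) (one-sidedly in s, using that 1−m > 1 so the right derivative of s ↦ s^{1−m} at 0 is 0), and its Jacobian matrix there, in the order of variables (χ, s, x), is [[0,0,0],[0,βχ,0],[β²χ,0,βχ]]; (iii) this matrix has eigenvalues 0 and βχ (the latter with algebraic multiplicity two), and if β < 0 and χ > 0 then both nonzero eigenvalues are negative, so the family of equilibria {(χ, 0, −βχ) : χ ≥ χ₀} (χ₀ > 0) is normally attracting. -/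

import Mathlib

open Real Set Matrix Polynomial

/-- The desingularized self-similar-profile vector field
`(χ, s, x) ↦ (s^{1-m}, -s x, -x² - βχ x - α s^{1-m})` (real power for `s ≥ 0`). -/
noncomputable def SSdesing (m a b : ℝ) (P : ℝ × ℝ × ℝ) : ℝ × ℝ × ℝ :=
  (P.2.1 ^ (1 - m),
   -(P.2.1 * P.2.2),
   -(P.2.2 ^ 2) - b * P.1 * P.2.2 - a * P.2.1 ^ (1 - m))

/-- For `m < 0`: (i) every `(χ,0,0)` and `(χ,0,-βχ)` is an
equilibrium of the desingularized field; (ii) the field is differentiable at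
`(χ,0,-βχ)` (one-sidedly in `s`, within `{s ≥ 0}`) with Jacobian
`[[0,0,0],[0,βχ,0],[β²χ,0,βχ]]`; (iii) this matrix has eigenvalues `0` and `βχ`, the
latter of algebraic multiplicity two (charpoly `X(X - βχ)²`), and when `β < 0`,
`χ > 0` the nonzero eigenvalue `βχ` is negative, so the family of equilibria
`(χ, 0, -βχ)` is normally attracting. -/
theorem selfsimilar_horizon_equilibria (m a b : ℝ) (hm : m < 0) :
    (∀ χ : ℝ, SSdesing m a b (χ, 0, 0) = 0 ∧ SSdesing m a b (χ, 0, -(b * χ)) = 0) ∧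
    (∀ χ : ℝ, ∃ L : ℝ × ℝ × ℝ →L[ℝ] ℝ × ℝ × ℝ,
      (∀ P : ℝ × ℝ × ℝ,
        L P = (0, b * χ * P.2.1, b ^ 2 * χ * P.1 + b * χ * P.2.2)) ∧
      HasFDerivWithinAt (SSdesing m a b) L {P : ℝ × ℝ × ℝ | 0 ≤ P.2.1}
        (χ, 0, -(b * χ))) ∧
    (∀ χ : ℝ,
      spectrum ℝ (!![0, 0, 0; 0, b * χ, 0; b ^ 2 * χ, 0, b * χ] : Matrix (Fin 3) (Fin 3) ℝ)
          = {0, b * χ} ∧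
      (!![0, 0, 0; 0, b * χ, 0; b ^ 2 * χ, 0, b * χ] : Matrix (Fin 3) (Fin 3) ℝ).charpoly
          = X * (X - C (b * χ)) ^ 2 ∧
      (b < 0 → 0 < χ → b * χ < 0)) := by
  have h1m0 : (1 : ℝ) - m ≠ 0 := by linarith
  refine ⟨?_, ?_, ?_⟩
  · intro χ
    constructor <;>
      · simp [SSdesing, Real.zero_rpow h1m0, Prod.ext_iff]
        try ring
  · intro χ
    set c1 : ℝ × ℝ × ℝ →L[ℝ] ℝ := ContinuousLinearMap.fst ℝ ℝ (ℝ × ℝ) with hc1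
    set c2 : ℝ × ℝ × ℝ →L[ℝ] ℝ :=
      (ContinuousLinearMap.fst ℝ ℝ ℝ).comp (ContinuousLinearMap.snd ℝ ℝ (ℝ × ℝ)) with hc2
    set c3 : ℝ × ℝ × ℝ →L[ℝ] ℝ :=
      (ContinuousLinearMap.snd ℝ ℝ ℝ).comp (ContinuousLinearMap.snd ℝ ℝ (ℝ × ℝ)) with hc3
    set pt : ℝ × ℝ × ℝ := (χ, 0, -(b * χ)) with hpt
    have h1m : (1 : ℝ) ≤ 1 - m := by linarith
    have hr : HasDerivAt (fun s : ℝ => s ^ (1 - m)) 0 0 := by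
      have h := Real.hasDerivAt_rpow_const (x := (0:ℝ)) (p := 1 - m) (Or.inr h1m)
      rwa [show (1:ℝ) - m - 1 = -m by ring, Real.zero_rpow (by linarith : -m ≠ 0),
        mul_zero] at h
    have hc2d : HasFDerivAt (fun P : ℝ × ℝ × ℝ => P.2.1) c2 pt := c2.hasFDerivAt
    have hc3d : HasFDerivAt (fun P : ℝ × ℝ × ℝ => P.2.2) c3 pt := c3.hasFDerivAt
    have hc1d : HasFDerivAt (fun P : ℝ × ℝ × ℝ => P.1) c1 pt := c1.hasFDerivAt
    have h1 : HasFDerivAt (fun P : ℝ × ℝ × ℝ => P.2.1 ^ (1 - m))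
        (0 : ℝ × ℝ × ℝ →L[ℝ] ℝ) pt := by
      have := hr.comp_hasFDerivAt pt hc2d
      simpa [Function.comp_def] using this
    have h2 : HasFDerivAt (fun P : ℝ × ℝ × ℝ => -(P.2.1 * P.2.2))
        ((b * χ) • c2) pt := by
      have h := (hc2d.mul hc3d).neg
      have he : -(((χ, 0, -(b * χ)) : ℝ × ℝ × ℝ).2.1 • c3
          + ((χ, 0, -(b * χ)) : ℝ × ℝ × ℝ).2.2 • c2) = (b * χ) • c2 :=
        ContinuousLinearMap.ext fun P => by simp
      rwa [hpt, he] at h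
    have h3 : HasFDerivAt
        (fun P : ℝ × ℝ × ℝ => -(P.2.2 ^ 2) - b * P.1 * P.2.2 - a * P.2.1 ^ (1 - m))
        ((b ^ 2 * χ) • c1 + (b * χ) • c3) pt := by
      have ha : HasFDerivAt (fun P : ℝ × ℝ × ℝ => b * P.1) ((b : ℝ) • c1) pt :=
        hc1d.const_mul b
      have h := (((hc3d.mul hc3d).neg.sub (ha.mul hc3d)).sub (h1.const_mul a))
      have he : -(((χ, 0, -(b * χ)) : ℝ × ℝ × ℝ).2.2 • c3
            + ((χ, 0, -(b * χ)) : ℝ × ℝ × ℝ).2.2 • c3)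
          - ((b * ((χ, 0, -(b * χ)) : ℝ × ℝ × ℝ).1) • c3
            + ((χ, 0, -(b * χ)) : ℝ × ℝ × ℝ).2.2 • (b • c1))
          - a • (0 : ℝ × ℝ × ℝ →L[ℝ] ℝ)
          = (b ^ 2 * χ) • c1 + (b * χ) • c3 :=
        ContinuousLinearMap.ext fun P => by simp; ring
      rw [hpt] at h
      rw [he] at h
      refine h.congr_of_eventuallyEq (Filter.Eventually.of_forall fun P => ?_)
      simp only [Pi.sub_apply, Pi.neg_apply, Pi.mul_apply]
      ring
    have hmain : HasFDerivAt (SSdesing m a b)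
        ((0 : ℝ × ℝ × ℝ →L[ℝ] ℝ).prod
          (((b * χ) • c2).prod ((b ^ 2 * χ) • c1 + (b * χ) • c3))) pt :=
      h1.prodMk (h2.prodMk h3)
    exact ⟨_, fun P => by simp [hc1, hc2, hc3], hmain.hasFDerivWithinAt⟩
  · intro χ
    refine ⟨?_, ?_, fun hb hχ => mul_neg_of_neg_of_pos hb hχ⟩
    · ext μ
      rw [spectrum.mem_iff, Matrix.isUnit_iff_isUnit_det, isUnit_iff_ne_zero, not_not,
        Matrix.det_fin_three]
      simp [Matrix.algebraMap_eq_diagonal, Matrix.diagonal, sub_eq_zero]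
    · rw [Matrix.charpoly, Matrix.det_fin_three]
      simp [charmatrix_apply_eq, charmatrix_apply_ne]
      ring
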